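/- Let F ⊆ ℂ be a number field that is Galois over ℚ (a finite-dimensional intermediate field of ℂ/ℚ with ℂ/F/ℚ such that F/ℚ is Galois), and let c ∈ Gal(F/ℚ) be the automorphism satisfying c(x) = conj(x) for all x ∈ F, where conj is complex conjugation on ℂ. Let N be the normal closure in Gal(F/ℚ) of the set {g·c·g⁻¹·c : g ∈ Gal(F/ℚ)}, and let F₁ be the fixed field of N. Let n ≥ 1 and let b be a weight for F that is strongly pure with purity weight w. Then for any two embeddings η, η' of F that agree on F₁ (i.e. η(x) = η'(x) for all x ∈ F₁), one has b^η_j = b^{η'}_j for all 1 ≤ j ≤ n. -/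

import Mathlib

set_option maxHeartbeats 1000000
set_option synthInstance.maxHeartbeats 400000

/-- Any automorphism of a subfield `F ⊆ ℂ` extends to a ring automorphism of `ℂ`. -/
lemma exists_ringEquiv_extension (F : IntermediateField ℚ ℂ) (τ : F ≃ₐ[ℚ] F) :
    ∃ σ : ℂ ≃+* ℂ, ∀ x : F, σ (algebraMap F ℂ x) = algebraMap F ℂ (τ x) := by
  obtain ⟨s, hs⟩ := exists_isTranscendenceBasis (F : Type) ℂ
  letI := IsAlgClosed.isAlgClosure_of_transcendence_basis _ hs
  set A := Algebra.adjoin (F : Type) (Set.range ((↑) : s → ℂ)) with hA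
  let e0 : MvPolynomial s F ≃+* MvPolynomial s F := MvPolynomial.mapEquiv s τ.toRingEquiv
  let e : A ≃+* A :=
    (hs.1.aevalEquiv.symm.toRingEquiv.trans e0).trans hs.1.aevalEquiv.toRingEquiv
  have he : ∀ x : F, e (algebraMap F A x) = algebraMap F A (τ x) := by
    intro x
    have h1 : hs.1.aevalEquiv.symm (algebraMap F A x) = MvPolynomial.C x := by
      exact hs.1.aevalEquiv.symm.commutes x
    have h2 : e0 (MvPolynomial.C x) = MvPolynomial.C (τ x) := by
      simp [e0]
    have h3 : hs.1.aevalEquiv (MvPolynomial.C (τ x)) = algebraMap F A (τ x) := by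
      simpa [MvPolynomial.algebraMap_eq] using hs.1.aevalEquiv.commutes (τ x)
    simp only [e, RingEquiv.trans_apply, AlgEquiv.toRingEquiv_eq_coe,
      AlgEquiv.coe_ringEquiv]
    rw [h1, h2, h3]
  refine ⟨IsAlgClosure.equivOfEquiv ℂ ℂ e, fun x => ?_⟩
  rw [IsScalarTower.algebraMap_apply F A ℂ x,
    IsAlgClosure.equivOfEquiv_algebraMap ℂ ℂ e (algebraMap F A x), he,
    ← IsScalarTower.algebraMap_apply F A ℂ (τ x)]



/-- Proposition 3.2 of the paper for `F ⊆ ℂ` Galois over `ℚ`.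
Let `c ∈ Gal(F/ℚ)` be the restriction of complex conjugation, `N` the
normal closure of `{g·c·g⁻¹·c}`, and `F₁` its fixed field.  If the weight
`b` is strongly pure with purity weight `w`, then `b^η = b^{η'}` whenever
the embeddings `η, η' : F →+* ℂ` agree on `F₁`. -/
theorem strongly_pure_base_change
    (F : IntermediateField ℚ ℂ) [FiniteDimensional ℚ F] [IsGalois ℚ F]
    (c : F ≃ₐ[ℚ] F) (hc : ∀ x : F, (c x : ℂ) = starRingEnd ℂ (x : ℂ))
    (n : ℕ) (hn : 1 ≤ n)
    (b : (F →+* ℂ) → ℕ → ℤ) (w : ℤ)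
    (hb : ∀ σ : ℂ ≃+* ℂ, ∀ η : F →+* ℂ, ∀ j, 1 ≤ j → j ≤ n →
      b (σ.toRingHom.comp η) j
        + b (σ.toRingHom.comp ((starRingEnd ℂ).comp η)) (n + 1 - j) = w)
    (η η' : F →+* ℂ)
    (hagree : ∀ x : F,
      x ∈ IntermediateField.fixedField
        (Subgroup.normalClosure
          {x : F ≃ₐ[ℚ] F | ∃ g : F ≃ₐ[ℚ] F, x = g * c * g⁻¹ * c}) →
      η x = η' x) :
    ∀ j, 1 ≤ j → j ≤ n → b η j = b η' j := by
  have hcoe : ∀ x : F, algebraMap F ℂ x = (x : ℂ) := fun x => rfl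
  -- embeddings attached to Galois elements
  let emb : (F ≃ₐ[ℚ] F) → (F →+* ℂ) := fun τ => (algebraMap F ℂ).comp (τ : F →+* F)
  let B : (F ≃ₐ[ℚ] F) → ℕ → ℤ := fun τ => b (emb τ)
  -- complex conjugation squared is the identity
  have hcc : c * c = 1 := by
    apply AlgEquiv.ext; intro x
    apply Subtype.coe_injective
    show ((c (c x) : F) : ℂ) = ((x : F) : ℂ)
    rw [hc, hc, Complex.conj_conj]
  -- the key relation coming from strong purity
  have key : ∀ (σ τ : F ≃ₐ[ℚ] F) (j : ℕ), 1 ≤ j → j ≤ n →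
      B (σ * τ) j + B (σ * c * τ) (n + 1 - j) = w := by
    intro σ τ j h1 h2
    obtain ⟨S, hS⟩ := exists_ringEquiv_extension F σ
    have h3 : S.toRingHom.comp (emb τ) = emb (σ * τ) := by
      ext x
      show S (algebraMap F ℂ (τ x)) = algebraMap F ℂ ((σ * τ) x)
      rw [hS (τ x)]; rfl
    have h4 : S.toRingHom.comp ((starRingEnd ℂ).comp (emb τ)) = emb (σ * c * τ) := by
      ext x
      show S (starRingEnd ℂ (algebraMap F ℂ (τ x))) = algebraMap F ℂ ((σ * c * τ) x)
      rw [hcoe, ← hc (τ x), ← hcoe, hS (c (τ x))]; rfl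
    have := hb S (emb τ) j h1 h2
    rw [h3, h4] at this
    exact this
  -- invariance of B under left multiplication by the generators
  have inv1 : ∀ g ρ : F ≃ₐ[ℚ] F, ∀ j, 1 ≤ j → j ≤ n →
      B (g * c * g⁻¹ * c * ρ) j = B ρ j := by
    intro g ρ j h1 h2
    set k := n + 1 - j with hk
    have hk1 : 1 ≤ k := by omega
    have hk2 : k ≤ n := by omega
    have hjk : n + 1 - k = j := by omega
    have e1 := key g (g⁻¹ * c * ρ) k hk1 hk2
    have e2 := key 1 (c * ρ) k hk1 hk2
    have h5 : g * (g⁻¹ * c * ρ) = c * ρ := by group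
    have h6 : g * c * (g⁻¹ * c * ρ) = g * c * g⁻¹ * c * ρ := by group
    have h7 : (1 : F ≃ₐ[ℚ] F) * (c * ρ) = c * ρ := by group
    have h8 : (1 : F ≃ₐ[ℚ] F) * c * (c * ρ) = ρ := by
      rw [one_mul, ← mul_assoc, hcc, one_mul]
    rw [h5, h6, hjk] at e1
    rw [h7, h8, hjk] at e2
    omega
  -- the invariance subgroup
  let H : Subgroup (F ≃ₐ[ℚ] F) :=
    { carrier := {s | ∀ ρ : F ≃ₐ[ℚ] F, ∀ j, 1 ≤ j → j ≤ n → B (s * ρ) j = B ρ j}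
      one_mem' := by intro ρ j h1 h2; rw [one_mul]
      mul_mem' := by
        intro a a' ha ha' ρ j h1 h2
        rw [mul_assoc, ha _ _ h1 h2, ha' _ _ h1 h2]
      inv_mem' := by
        intro a ha ρ j h1 h2
        have := ha (a⁻¹ * ρ) j h1 h2
        rw [← mul_assoc, mul_inv_cancel, one_mul] at this
        exact this.symm }
  have hcinv : c⁻¹ = c := inv_eq_of_mul_eq_one_right hcc
  have hcc2 : ∀ x : F ≃ₐ[ℚ] F, c * (c * x) = x := fun x => by
    rw [← mul_assoc, hcc, one_mul]
  -- the normal closure is contained in H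
  have hNsub : Subgroup.normalClosure
      {x : F ≃ₐ[ℚ] F | ∃ g : F ≃ₐ[ℚ] F, x = g * c * g⁻¹ * c} ≤ H := by
    rw [Subgroup.normalClosure]
    refine (Subgroup.closure_le H).2 ?_
    rintro y hy
    rw [Group.mem_conjugatesOfSet_iff] at hy
    obtain ⟨a, ⟨g, rfl⟩, hconj⟩ := hy
    obtain ⟨h, rfl⟩ := isConj_iff.1 hconj
    have hfact : h * (g * c * g⁻¹ * c) * h⁻¹ =
        ((h * g) * c * (h * g)⁻¹ * c) * ((c * h) * c * (c * h)⁻¹ * c) := by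
      simp only [mul_inv_rev, hcinv, mul_assoc, hcc2, inv_mul_cancel_left, hcc, mul_one]
    have m1 : (h * g) * c * (h * g)⁻¹ * c ∈ H := fun ρ j h1 h2 => inv1 _ _ _ h1 h2
    have m2 : (c * h) * c * (c * h)⁻¹ * c ∈ H := fun ρ j h1 h2 => inv1 _ _ _ h1 h2
    show h * (g * c * g⁻¹ * c) * h⁻¹ ∈ H
    rw [hfact]
    exact H.mul_mem m1 m2
  -- turn the embeddings into Galois elements
  have comm : ∀ (θ : F →+* ℂ) (q : ℚ), θ (algebraMap ℚ F q) = algebraMap ℚ ℂ q := by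
    intro θ q
    calc θ (algebraMap ℚ F q) = (θ.comp (algebraMap ℚ F)) q := rfl
    _ = (q : ℂ) := eq_ratCast _ q
    _ = algebraMap ℚ ℂ q := (eq_ratCast _ q).symm
  let ηa : F →ₐ[ℚ] ℂ := ⟨η, comm η⟩
  let ηa' : F →ₐ[ℚ] ℂ := ⟨η', comm η'⟩
  let τ : F ≃ₐ[ℚ] F := ηa.restrictNormal' F
  let τ' : F ≃ₐ[ℚ] F := ηa'.restrictNormal' F
  have hτ : ∀ x : F, algebraMap F ℂ (τ x) = η x := fun x =>
    ηa.restrictNormal_commutes F x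
  have hτ' : ∀ x : F, algebraMap F ℂ (τ' x) = η' x := fun x =>
    ηa'.restrictNormal_commutes F x
  have hη : η = emb τ := RingHom.ext fun x => (hτ x).symm
  have hη' : η' = emb τ' := RingHom.ext fun x => (hτ' x).symm
  -- τ'⁻¹ * τ lies in the normal closure
  set N := Subgroup.normalClosure
    {x : F ≃ₐ[ℚ] F | ∃ g : F ≃ₐ[ℚ] F, x = g * c * g⁻¹ * c} with hN
  have hmem : τ'⁻¹ * τ ∈ N := by
    rw [← IntermediateField.fixingSubgroup_fixedField N]
    rw [IntermediateField.fixingSubgroup]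
    rw [mem_fixingSubgroup_iff]
    intro y hy
    have hyy : τ y = τ' y := by
      apply (algebraMap F ℂ).injective
      rw [hτ, hτ']
      exact hagree y hy
    show (τ'⁻¹ * τ) y = y
    rw [AlgEquiv.mul_apply, hyy]
    exact τ'.symm_apply_apply y
  -- conclude
  intro j h1 h2
  have hmem2 : τ' * (τ'⁻¹ * τ) * τ'⁻¹ ∈ N :=
    Subgroup.Normal.conj_mem (Subgroup.normalClosure_normal) _ hmem τ'
  have := hNsub hmem2 τ' j h1 h2
  have hsimp : τ' * (τ'⁻¹ * τ) * τ'⁻¹ * τ' = τ := by group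
  rw [hsimp] at this
  rw [hη, hη']
  exact this
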